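/- Let B be a finite multiset of intervals whose endpoints lie in a fixed finite set of critical values t_0 < t_1 < ... < t_N, and let i(t,t') denote the number of intervals in B containing [t,t']. Then the number of open intervals (t_k, t_j) in B equals i(t'',t') - i(t_k,t') - i(t'',t_j) + i(t_k,t_j) for any t'', t' with t_k < t'' < t_{k+1} and t_{j-1} < t' < t_j. -/
import Mathlib


open Classical Multiset

noncomputable section

/-- The four kinds of intervals: closed-closed, closed-open, open-closed, open-open. -/
inductive BarKind : Type
  | cc | co | oc | oo
  deriving DecidableEq

/-- A real interval of one of the four types, with endpoints `a ≤ b`. -/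
structure Bar : Type where
  kind : BarKind
  a : ℝ
  b : ℝ

instance : DecidableEq Bar := Classical.decEq _

namespace Bar

/-- The underlying set of points of the interval. -/
def toSet (I : Bar) : Set ℝ :=
  match I.kind with
  | .cc => Set.Icc I.a I.b
  | .co => Set.Ico I.a I.b
  | .oc => Set.Ioc I.a I.b
  | .oo => Set.Ioo I.a I.b

/-- Nonemptiness condition: `a ≤ b` for closed intervals, `a < b` otherwise. -/
def Valid (I : Bar) : Prop :=
  match I.kind with
  | .cc => I.a ≤ I.b
  | _ => I.a < I.b

def rightOpen (I : Bar) : Prop := I.kind = .co ∨ I.kind = .oo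
def leftOpen (I : Bar) : Prop := I.kind = .oc ∨ I.kind = .oo
def leftClosed (I : Bar) : Prop := I.kind = .cc ∨ I.kind = .co

end Bar

/-- `i(t,t')`: the number of intervals of `B` containing `[t,t']`. -/
def icount (B : Multiset Bar) (t t' : ℝ) : ℕ :=
  countP (fun I => Set.Icc t t' ⊆ I.toSet) B

/-- `l(t)`: the number of intervals of `B` containing `t`. -/
def lcount (B : Multiset Bar) (t : ℝ) : ℕ :=
  countP (fun I => t ∈ I.toSet) B

/-- `l⁺(t;t')`: intervals of `B` containing `t` with open right endpoint `≤ t'`. -/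
def lplus (B : Multiset Bar) (t t' : ℝ) : ℕ :=
  countP (fun I => t ∈ I.toSet ∧ I.rightOpen ∧ I.b ≤ t') B

/-- `l⁻(t;t'')`: intervals of `B` containing `t` with open left endpoint `≥ t''`. -/
def lminus (B : Multiset Bar) (t t'' : ℝ) : ℕ :=
  countP (fun I => t ∈ I.toSet ∧ I.leftOpen ∧ t'' ≤ I.a) B

/-- `e(t;t',t'')`: open intervals `(a,b)` of `B` with `t'' ≤ a < t < b ≤ t'`. -/
def ecount (B : Multiset Bar) (t t' t'' : ℝ) : ℕ :=
  countP (fun I => I.kind = .oo ∧ t'' ≤ I.a ∧ I.a < t ∧ t < I.b ∧ I.b ≤ t') B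

/-- All endpoints of intervals of `B` lie among the critical values `t 0, …, t N`. -/
def endpointsIn (B : Multiset Bar) (t : ℕ → ℝ) (N : ℕ) : Prop :=
  ∀ I ∈ B, (∃ i ≤ N, I.a = t i) ∧ (∃ j ≤ N, I.b = t j)


lemma key_aux (tk tj t'' t' : ℝ) (I : Bar)
    (ha1 : I.a ≤ t'' ↔ I.a ≤ tk) (ha2 : I.a < t'' ↔ I.a ≤ tk)
    (hb1 : t' ≤ I.b ↔ tj ≤ I.b) (hb2 : t' < I.b ↔ tj ≤ I.b)
    (hne1 : t'' ≤ t') (hne2 : tk ≤ t') (hne3 : t'' ≤ tj) (hne4 : tk ≤ tj) :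
    ((if (⟨.oo, tk, tj⟩ : Bar) = I then 1 else 0 : ℤ)) =
      (if Set.Icc t'' t' ⊆ I.toSet then 1 else 0)
      - (if Set.Icc tk t' ⊆ I.toSet then 1 else 0)
      - (if Set.Icc t'' tj ⊆ I.toSet then 1 else 0)
      + (if Set.Icc tk tj ⊆ I.toSet then 1 else 0) := by
  obtain ⟨kind, a, b⟩ := I
  simp only [Bar.a, Bar.b] at ha1 ha2 hb1 hb2
  cases kind
  case cc =>
    simp only [Bar.toSet, Set.Icc_subset_Icc_iff hne1, Set.Icc_subset_Icc_iff hne2,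
      Set.Icc_subset_Icc_iff hne3, Set.Icc_subset_Icc_iff hne4, ha1, hb1]
    rw [if_neg (by simp)]
    ring
  case co =>
    simp only [Bar.toSet, Set.Icc_subset_Ico_iff hne1, Set.Icc_subset_Ico_iff hne2,
      Set.Icc_subset_Ico_iff hne3, Set.Icc_subset_Ico_iff hne4, ha1, hb2]
    rw [if_neg (by simp)]
    ring
  case oc =>
    simp only [Bar.toSet, Set.Icc_subset_Ioc_iff hne1, Set.Icc_subset_Ioc_iff hne2,
      Set.Icc_subset_Ioc_iff hne3, Set.Icc_subset_Ioc_iff hne4, ha2, hb1]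
    rw [if_neg (by simp)]
    ring
  case oo =>
    have hEq : (({ kind := BarKind.oo, a := tk, b := tj } : Bar) =
        { kind := BarKind.oo, a := a, b := b }) ↔
        ((a ≤ tk ∧ ¬ a < tk) ∧ (tj ≤ b ∧ ¬ tj < b)) := by
      simp only [Bar.mk.injEq, true_and]
      constructor
      · rintro ⟨rfl, rfl⟩; simp
      · rintro ⟨⟨x1, x2⟩, y1, y2⟩
        exact ⟨le_antisymm (le_of_not_gt x2) x1, le_antisymm y1 (le_of_not_gt y2)⟩
    simp only [Bar.toSet, Set.Icc_subset_Ioo_iff hne1, Set.Icc_subset_Ioo_iff hne2,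
      Set.Icc_subset_Ioo_iff hne3, Set.Icc_subset_Ioo_iff hne4, ha2, hb2, hEq]
    by_cases hA : a ≤ tk <;> by_cases hB : tj ≤ b <;>
      by_cases hA' : a < tk <;> by_cases hB' : tj < b <;>
      first
        | (exfalso; linarith)
        | (simp [hA, hB, hA', hB']; try norm_num)
        | (simp [hA, hB, hA', hB'] <;> norm_num)

theorem stmt1 (N : ℕ) (t : ℕ → ℝ) (ht : StrictMono t)
    (B : Multiset Bar) (hB : endpointsIn B t N)
    (k j : ℕ) (hk : k + 1 ≤ N) (hj1 : 1 ≤ j) (hjN : j ≤ N)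
    (t'' t' : ℝ) (h1 : t k < t'') (h2 : t'' < t (k + 1))
    (h3 : t (j - 1) < t') (h4 : t' < t j) (h5 : t'' ≤ t') :
    (count (⟨.oo, t k, t j⟩ : Bar) B : ℤ) =
      (icount B t'' t' : ℤ) - icount B (t k) t' - icount B t'' (t j)
        + icount B (t k) (t j) := by
  revert hB
  have hkt' : t k ≤ t' := by linarith
  have ht''j : t'' ≤ t j := by linarith
  have hkj : t k ≤ t j := by linarith
  refine Multiset.induction_on B ?_ ?_
  · intro _; simp [icount]
  · intro I S ih hB
    have hI := hB I (Multiset.mem_cons_self I S)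
    have hS : endpointsIn S t N := fun J hJ => hB J (Multiset.mem_cons_of_mem hJ)
    obtain ⟨⟨i, hiN, hai⟩, ⟨m, hmN, hbm⟩⟩ := hI
    have ha : I.a ≤ t k ∨ t (k+1) ≤ I.a := by
      rcases le_or_gt i k with h | h
      · left; rw [hai]; exact ht.monotone h
      · right; rw [hai]; exact ht.monotone h
    have hbo : t j ≤ I.b ∨ I.b ≤ t (j-1) := by
      rcases le_or_gt j m with h | h
      · left; rw [hbm]; exact ht.monotone h
      · right; rw [hbm]; exact ht.monotone (by omega)
    have ha1 : I.a ≤ t'' ↔ I.a ≤ t k := by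
      rcases ha with h | h <;> constructor <;> intro hx <;> linarith
    have ha2 : I.a < t'' ↔ I.a ≤ t k := by
      rcases ha with h | h <;> constructor <;> intro hx <;> linarith
    have hjj : t (j-1) < t j := ht (by omega)
    have hb1 : t' ≤ I.b ↔ t j ≤ I.b := by
      rcases hbo with h | h <;> constructor <;> intro hx <;> linarith
    have hb2 : t' < I.b ↔ t j ≤ I.b := by
      rcases hbo with h | h <;> constructor <;> intro hx <;> linarith
    have hkey := key_aux (t k) (t j) t'' t' I ha1 ha2 hb1 hb2 h5 hkt' ht''j hkj
    have ihh := ih hS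
    simp only [icount, Multiset.countP_cons, Multiset.count_cons]
    simp only [icount] at ihh
    push_cast
    push_cast at ihh
    linarith [hkey, ihh]
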